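/- If T is an invertible bilateral forward weighted shift on ℓ²(ℤ) with weight sequence {w_n}, then T is diskcyclic if and only if there exists a sequence {n_r} of positive integers such that ∏_{k=1}^{n_r} 1/w_{-k} → 0 and (∏_{k=1}^{n_r} w_k)(∏_{k=1}^{n_r} 1/w_{-k}) → 0 as r → ∞. -/

import Mathlib

open Filter Topology Pointwise
open scoped ENNReal

/-- The disk orbit of `x` under `T`: `{α • Tⁿ x : n ≥ 0, α ∈ ℂ, |α| ≤ 1}`. -/
def diskOrbit {H : Type*} [NormedAddCommGroup H] [NormedSpace ℂ H]
    (T : H →L[ℂ] H) (x : H) : Set H :=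
  {y | ∃ (n : ℕ) (α : ℂ), ‖α‖ ≤ 1 ∧ y = α • (T ^ n) x}

/-- An operator is diskcyclic if some vector has dense disk orbit. -/
def DiskCyclic {H : Type*} [NormedAddCommGroup H] [NormedSpace ℂ H]
    (T : H →L[ℂ] H) : Prop :=
  ∃ x : H, Dense (diskOrbit T x)

noncomputable section
namespace Stmt11Aux

abbrev H2 := lp (fun _ : ℤ => ℂ) 2

/-- product of weights `w a * w (a+1) * ... * w (a+n-1)` -/
def W (w : ℤ → ℝ) (a : ℤ) (n : ℕ) : ℝ := ∏ i ∈ Finset.range n, w (a + i)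

variable {w : ℤ → ℝ}

lemma W_pos (hw : ∀ n, 0 < w n) (a : ℤ) (n : ℕ) : 0 < W w a n :=
  Finset.prod_pos fun _ _ => hw _

lemma W_add (a : ℤ) (m n : ℕ) : W w a (m + n) = W w a m * W w (a + m) n := by
  rw [W, Finset.prod_range_add, W, W]
  congr 1
  refine Finset.prod_congr rfl fun i _ => ?_
  congr 1
  push_cast
  ring

lemma W_le_pow (hw : ∀ n, 0 < w n) {M : ℝ} (hM : ∀ n, w n ≤ M) (a : ℤ) (n : ℕ) :
    W w a n ≤ M ^ n := by
  calc W w a n ≤ ∏ _i ∈ Finset.range n, M :=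
        Finset.prod_le_prod (fun _ _ => (hw _).le) (fun _ _ => hM _)
  _ = M ^ n := by simp

lemma pow_le_W {m : ℝ} (hm0 : 0 ≤ m) (hm : ∀ n, m ≤ w n) (a : ℤ) (n : ℕ) :
    m ^ n ≤ W w a n := by
  calc (m : ℝ) ^ n = ∏ _i ∈ Finset.range n, m := by simp
  _ ≤ W w a n := Finset.prod_le_prod (fun _ _ => hm0) (fun _ _ => hm _)

/-- comparison of windows shifted by `d ≥ 0`, both directions -/
lemma W_shift_le (hw : ∀ n, 0 < w n) {m M : ℝ} (hm0 : 0 < m) (hm : ∀ n, m ≤ w n)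
    (hM : ∀ n, w n ≤ M) (a : ℤ) (d n : ℕ) :
    W w (a + d) n ≤ (M / m) ^ d * W w a n ∧
    W w a n ≤ (M / m) ^ d * W w (a + d) n := by
  have key : W w a d * W w (a + d) n = W w a n * W w (a + n) d := by
    rw [← W_add, ← W_add, Nat.add_comm]
  have hMpos : 0 < M := hm0.trans_le ((hm 0).trans (hM 0))
  have h1 : m ^ d ≤ W w a d := pow_le_W hm0.le hm a d
  have h2 : W w a d ≤ M ^ d := W_le_pow hw hM a d
  have h3 : m ^ d ≤ W w (a + n) d := pow_le_W hm0.le hm _ d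
  have h4 : W w (a + n) d ≤ M ^ d := W_le_pow hw hM _ d
  have hWpos := W_pos hw
  constructor
  · rw [div_pow]
    have : W w a d * W w (a + d) n ≤ W w a n * M ^ d := key.le.trans
      (by nlinarith [hWpos a n, hWpos (a+d) n, hWpos a d, hWpos (a+n) d])
    rw [div_mul_eq_mul_div, le_div_iff₀ (by positivity)]
    nlinarith [hWpos a n, hWpos (a+d) n, hWpos a d, pow_pos hm0 d]
  · rw [div_pow, div_mul_eq_mul_div, le_div_iff₀ (by positivity)]
    have : W w a n * W w (a + n) d ≤ W w (a + d) n * M ^ d := key.symm.le.trans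
      (by nlinarith [hWpos a n, hWpos (a+d) n, hWpos a d, hWpos (a+n) d])
    nlinarith [hWpos a n, hWpos (a+d) n, hWpos (a+n) d, pow_pos hm0 d]

/-- integer-shift comparison: `W w a n ≤ K ^ |a - b| * W w b n` with `K = M / m`. -/
lemma W_comp (hw : ∀ n, 0 < w n) {m M : ℝ} (hm0 : 0 < m) (hm : ∀ n, m ≤ w n)
    (hM : ∀ n, w n ≤ M) (a b : ℤ) (n : ℕ) :
    W w a n ≤ (M / m) ^ (a - b).natAbs * W w b n := by
  rcases le_total b a with h | h
  · obtain ⟨d, hd, hd2⟩ : ∃ d : ℕ, a = b + d ∧ (a - b).natAbs = d :=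
      ⟨(a - b).natAbs, by omega, rfl⟩
    rw [hd2, hd]
    exact (W_shift_le hw hm0 hm hM b d n).1
  · obtain ⟨d, hd, hd2⟩ : ∃ d : ℕ, b = a + d ∧ (a - b).natAbs = d :=
      ⟨(a - b).natAbs, by omega, rfl⟩
    rw [hd2]
    have := (W_shift_le hw hm0 hm hM a d n).2
    rwa [← hd] at this

end Stmt11Aux

namespace Stmt11Aux

lemma two_toReal_pos : 0 < (2 : ℝ≥0∞).toReal := by norm_num

lemma single_apply' (i : ℤ) (a : ℂ) (j : ℤ) :
    ((lp.single 2 i a : H2) : ∀ _ : ℤ, ℂ) j = if j = i then a else 0 := by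
  rcases eq_or_ne j i with rfl | h
  · rw [lp.single_apply_self (E := fun _ : ℤ => ℂ), if_pos rfl]
  · rw [lp.single_apply_ne (E := fun _ : ℤ => ℂ) 2 i a h, if_neg h]

lemma single_zero (i : ℤ) : (lp.single 2 i (0 : ℂ) : H2) = 0 := by
  apply lp.ext; funext j
  simp [single_apply']

lemma norm_single' (i : ℤ) (a : ℂ) : ‖(lp.single 2 i a : H2)‖ = ‖a‖ := by
  simpa using lp.norm_single (E := fun _ : ℤ => ℂ) two_toReal_pos (fun _ : ℤ => a) i

lemma sum_single_apply (A : Finset ℤ) (c : ℤ → ℂ) (j : ℤ) :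
    (((∑ i ∈ A, lp.single 2 i (c i)) : H2) : ∀ _ : ℤ, ℂ) j = if j ∈ A then c j else 0 := by
  rw [lp.coeFn_sum, Finset.sum_apply]
  simp_rw [single_apply']
  exact Finset.sum_ite_eq A j c

lemma norm_sum_single_le' (A : Finset ℤ) (σ : ℤ → ℤ) (c : ℤ → ℂ) :
    ‖((∑ i ∈ A, lp.single 2 (σ i) (c i)) : H2)‖ ≤ ∑ i ∈ A, ‖c i‖ := by
  refine (norm_sum_le A _).trans ?_
  refine Finset.sum_le_sum fun i _ => ?_
  rw [norm_single' (σ i) (c i)]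

lemma norm_sum_single_le (A : Finset ℤ) (c : ℤ → ℂ) :
    ‖((∑ i ∈ A, lp.single 2 i (c i)) : H2)‖ ≤ ∑ i ∈ A, ‖c i‖ :=
  norm_sum_single_le' A id c

section withT
variable {T : H2 →L[ℂ] H2} {w : ℤ → ℝ}

lemma pow_apply
    (hT : ∀ (x : H2) (n : ℤ), (T x : ∀ _ : ℤ, ℂ) n = (w (n - 1) : ℂ) * (x : ∀ _ : ℤ, ℂ) (n - 1))
    (x : H2) (n : ℕ) (j : ℤ) :
    ((T ^ n) x : ∀ _ : ℤ, ℂ) j = (W w (j - n) n : ℂ) * (x : ∀ _ : ℤ, ℂ) (j - n) := by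
  induction n generalizing j with
  | zero => simp [W]
  | succ n ih =>
    have key : ((T ^ (n+1)) x : ∀ _ : ℤ, ℂ) j
        = (w (j-1) : ℂ) * ((W w (j - 1 - n) n : ℂ) * (x : ∀ _ : ℤ, ℂ) (j - 1 - n)) := by
      rw [pow_succ', ContinuousLinearMap.mul_apply, hT, ih (j - 1)]
    rw [key]
    have harg : j - ((n+1 : ℕ) : ℤ) = j - 1 - n := by push_cast; ring
    rw [harg]
    have hW : W w (j - 1 - (n : ℤ)) (n + 1) = W w (j - 1 - n) n * w (j - 1) := by
      rw [W, W, Finset.prod_range_succ]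
      have : j - 1 - (n : ℤ) + n = j - 1 := by ring
      rw [this]
    rw [hW]
    push_cast
    ring

lemma pow_single
    (hT : ∀ (x : H2) (n : ℤ), (T x : ∀ _ : ℤ, ℂ) n = (w (n - 1) : ℂ) * (x : ∀ _ : ℤ, ℂ) (n - 1))
    (n : ℕ) (i : ℤ) (a : ℂ) :
    (T ^ n) (lp.single 2 i a) = lp.single 2 (i + n) ((W w i n : ℂ) * a) := by
  apply lp.ext; funext j
  rw [pow_apply hT, single_apply', single_apply']
  rcases eq_or_ne j (i + n) with rfl | h
  · rw [if_pos rfl, if_pos (show i + (n:ℤ) - n = i by ring)]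
    rw [show i + (n:ℤ) - n = i by ring]
  · rw [if_neg h, if_neg (by omega), mul_zero]

end withT
end Stmt11Aux

namespace Stmt11Aux

lemma prod_inv_eq (w : ℤ → ℝ) (hw : ∀ n, 0 < w n) (n : ℕ) :
    ∏ k ∈ Finset.range n, 1 / w (-((k : ℤ) + 1)) = 1 / W w (-(n:ℤ)) n := by
  simp_rw [one_div]
  rw [Finset.prod_inv_distrib]
  congr 1
  rw [W]
  rw [← Finset.prod_range_reflect (fun k => w (-((k : ℤ) + 1))) n]
  refine Finset.prod_congr rfl fun j hj => ?_
  congr 1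
  have hj' : j < n := Finset.mem_range.mp hj
  push_cast [Nat.cast_sub, hj'] <;> omega

lemma prod_pos_eq (w : ℤ → ℝ) (n : ℕ) :
    ∏ k ∈ Finset.range n, w ((k : ℤ) + 1) = W w 1 n := by
  rw [W]
  refine Finset.prod_congr rfl fun j _ => ?_
  congr 1
  ring

end Stmt11Aux

namespace Stmt11Aux
section main
variable {w : ℤ → ℝ} {T : H2 →L[ℂ] H2}

lemma weight_le_M
    (hT : ∀ (x : H2) (n : ℤ), (T x : ∀ _ : ℤ, ℂ) n = (w (n - 1) : ℂ) * (x : ∀ _ : ℤ, ℂ) (n - 1))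
    (hw : ∀ n, 0 < w n) (i : ℤ) : w i ≤ max ‖T‖ 1 := by
  have h1 := pow_single hT 1 i 1
  have hW1 : W w i 1 = w i := by simp [W]
  have hn : ‖(T ^ 1) (lp.single 2 i (1:ℂ))‖ = w i := by
    rw [h1, norm_single', hW1, mul_one, Complex.norm_real, Real.norm_of_nonneg (hw i).le]
  have hb : ‖(T ^ 1) (lp.single 2 i (1:ℂ))‖ ≤ ‖T‖ * ‖(lp.single 2 i (1:ℂ) : H2)‖ := by
    rw [pow_one]; exact T.le_opNorm _
  rw [hn, norm_single', norm_one, mul_one] at hb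
  exact le_max_of_le_left hb

lemma forward
    (hw : ∀ n, 0 < w n) (hinv : ∃ m : ℝ, 0 < m ∧ ∀ n, m ≤ w n)
    (hT : ∀ (x : H2) (n : ℤ), (T x : ∀ _ : ℤ, ℂ) n = (w (n - 1) : ℂ) * (x : ∀ _ : ℤ, ℂ) (n - 1))
    (hd : DiskCyclic T) :
    ∃ n : ℕ → ℕ, (∀ r, 0 < n r) ∧
      Filter.Tendsto (fun r => ∏ k ∈ Finset.range (n r), 1 / w (-((k : ℤ) + 1)))
        Filter.atTop (nhds 0) ∧
      Filter.Tendsto (fun r => (∏ k ∈ Finset.range (n r), w ((k : ℤ) + 1)) *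
          ∏ k ∈ Finset.range (n r), 1 / w (-((k : ℤ) + 1)))
        Filter.atTop (nhds 0) := by
  classical
  obtain ⟨x, hx⟩ := hd
  obtain ⟨m, hm0, hm⟩ := hinv
  set M : ℝ := max ‖T‖ 1 with hMdef
  have hM : ∀ i, w i ≤ M := weight_le_M hT hw
  have hM1 : (1:ℝ) ≤ M := le_max_right _ _
  set m' : ℝ := min m 1 with hm'def
  have hm'0 : 0 < m' := lt_min hm0 one_pos
  have hm' : ∀ i, m' ≤ w i := fun i => (min_le_left _ _).trans (hm i)
  set K : ℝ := M / m' with hKdef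
  have hK1 : (1:ℝ) ≤ K := by
    rw [hKdef, le_div_iff₀ hm'0, one_mul]
    exact (min_le_right m 1).trans hM1
  -- a nonzero coordinate of x
  have hxne : ∃ j0 : ℤ, (x : ∀ _ : ℤ, ℂ) j0 ≠ 0 := by
    by_contra hc
    push_neg at hc
    have hx0 : x = 0 := lp.ext (funext hc)
    have h1 := Metric.mem_closure_iff.mp (hx (lp.single 2 0 (1:ℂ))) (1/2) (by norm_num)
    obtain ⟨b, ⟨nb, αb, -, rfl⟩, hdist⟩ := h1
    rw [hx0] at hdist
    simp only [map_zero, smul_zero, dist_zero_right, norm_single', norm_one] at hdist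
    norm_num at hdist
  obtain ⟨j0, hj0⟩ := hxne
  have hxpos : 0 < ‖x‖ :=
    norm_pos_iff.mpr (fun h => hj0 (by rw [h]; rfl))
  have hxj0 : 0 < ‖(x : ∀ _ : ℤ, ℂ) j0‖ := norm_pos_iff.mpr hj0
  set N0 : ℕ := j0.natAbs with hN0
  set R0 : ℝ := ‖x‖ * M ^ (N0 + 1) + 1 with hR0
  have hR0pos : 1 ≤ R0 := by
    have : 0 < ‖x‖ * M ^ (N0+1) := by positivity
    linarith
  set c : ℕ → ℝ := fun r => (r : ℝ) + R0 with hc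
  have hceq : ∀ r : ℕ, c r = (r:ℝ) + R0 := fun r => rfl
  have hcpos : ∀ r, 0 < c r - 1/2 := fun r => by
    have h0 : (0:ℝ) ≤ (r:ℝ) := Nat.cast_nonneg r
    rw [hceq r]; linarith
  have hc0 : ∀ r, (0:ℝ) ≤ c r := fun r => by
    have h0 : (0:ℝ) ≤ (r:ℝ) := Nat.cast_nonneg r
    rw [hceq r]; linarith
  -- choose approximations
  have hch : ∀ r : ℕ, ∃ (n : ℕ) (α : ℂ), ‖α‖ ≤ 1 ∧
      ‖α • (T ^ n) x - ((c r : ℝ) : ℂ) • lp.single 2 0 (1:ℂ)‖ < 1/2 := by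
    intro r
    have h1 := Metric.mem_closure_iff.mp (hx (((c r : ℝ) : ℂ) • lp.single 2 0 (1:ℂ)))
      (1/2) (by norm_num)
    obtain ⟨b, ⟨nb, αb, hαb, rfl⟩, hdist⟩ := h1
    exact ⟨nb, αb, hαb, by rwa [dist_eq_norm, norm_sub_rev] at hdist⟩
  choose n α hα happ using hch
  set P : ℕ → ℝ := fun r => W w (-(n r : ℤ)) (n r) with hP
  have hPpos : ∀ r, 0 < P r := fun r => W_pos hw _ _
  have hWpos := W_pos hw
  -- coordinate evaluation helper
  have hcoord : ∀ (r : ℕ) (j : ℤ),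
      ‖α r * ((W w (j - n r) (n r) : ℝ) : ℂ) * (x : ∀ _ : ℤ, ℂ) (j - n r)
        - ((c r : ℝ) : ℂ) * (if j = 0 then 1 else 0)‖ < 1/2 := by
    intro r j
    have h1 : ‖(α r • (T ^ n r) x - ((c r : ℝ) : ℂ) • lp.single 2 0 (1:ℂ) : H2)‖ < 1/2 :=
      happ r
    have h2 := lp.norm_apply_le_norm (E := fun _ : ℤ => ℂ) (p := 2) (by norm_num)
      (α r • (T ^ n r) x - ((c r : ℝ) : ℂ) • lp.single 2 0 (1:ℂ)) j
    have h3 : ((α r • (T ^ n r) x - ((c r : ℝ) : ℂ) • lp.single 2 0 (1:ℂ) : H2) : ∀ _ : ℤ, ℂ) j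
        = α r * ((W w (j - n r) (n r) : ℝ) : ℂ) * (x : ∀ _ : ℤ, ℂ) (j - n r)
          - ((c r : ℝ) : ℂ) * (if j = 0 then 1 else 0) := by
      rw [lp.coeFn_sub, Pi.sub_apply, lp.coeFn_smul, lp.coeFn_smul, Pi.smul_apply,
        Pi.smul_apply, pow_apply hT, single_apply']
      simp [smul_eq_mul, mul_assoc]
    rw [h3] at h2
    exact lt_of_le_of_lt h2 h1
  -- fact 1 : coordinate 0
  have f1 : ∀ r, c r - 1/2 ≤ ‖α r‖ * P r * ‖(x : ∀ _ : ℤ, ℂ) (-(n r : ℤ))‖ := by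
    intro r
    have h := hcoord r 0
    rw [if_pos rfl, mul_one] at h
    have h2 : ‖((c r : ℝ) : ℂ)‖ - ‖α r * ((P r : ℝ) : ℂ) * (x : ∀ _ : ℤ, ℂ) (0 - n r)‖
        ≤ ‖α r * ((P r : ℝ) : ℂ) * (x : ∀ _ : ℤ, ℂ) (0 - n r) - ((c r : ℝ) : ℂ)‖ := by
      rw [norm_sub_rev]; exact norm_sub_norm_le _ _
    have h4 : (0:ℤ) - n r = -(n r : ℤ) := by ring
    rw [h4] at h h2
    have h5 : ‖((c r : ℝ) : ℂ)‖ = c r := by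
      rw [Complex.norm_real, Real.norm_of_nonneg (hc0 r)]
    have h6 : ‖α r * ((P r : ℝ) : ℂ) * (x : ∀ _ : ℤ, ℂ) (-(n r:ℤ))‖
        = ‖α r‖ * P r * ‖(x : ∀ _ : ℤ, ℂ) (-(n r:ℤ))‖ := by
      rw [norm_mul, norm_mul, Complex.norm_real, Real.norm_of_nonneg (hPpos r).le]
    rw [h5, h6] at h2
    have := hcoord r 0
    linarith [h2.trans h.le]
  have f1' : ∀ r, c r - 1/2 ≤ P r * ‖x‖ := by
    intro r
    refine (f1 r).trans ?_
    have hb := lp.norm_apply_le_norm (E := fun _ : ℤ => ℂ) (p := 2) (by norm_num) x (-(n r : ℤ))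
    calc ‖α r‖ * P r * ‖(x : ∀ _ : ℤ, ℂ) (-(n r:ℤ))‖
        ≤ 1 * P r * ‖x‖ := by
          apply mul_le_mul (mul_le_mul_of_nonneg_right (hα r) (hPpos r).le) hb (norm_nonneg _)
          have := (hPpos r).le; linarith
      _ = P r * ‖x‖ := by ring
  -- n r is large
  have f2 : ∀ r, N0 + 1 < n r := by
    intro r
    by_contra hle
    push_neg at hle
    have h1 : P r ≤ M ^ n r := W_le_pow hw hM _ _
    have h2 : M ^ n r ≤ M ^ (N0 + 1) := pow_le_pow_right₀ hM1 hle
    have h3 : c r - 1/2 ≤ M ^ (N0+1) * ‖x‖ := by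
      calc c r - 1/2 ≤ P r * ‖x‖ := f1' r
      _ ≤ M ^ (N0+1) * ‖x‖ := by
          apply mul_le_mul_of_nonneg_right (h1.trans h2) (norm_nonneg _)
    have h4 : ‖x‖ * M ^ (N0+1) + 1/2 ≤ c r - 1/2 := by
      have h0 : (0:ℝ) ≤ (r:ℝ) := Nat.cast_nonneg r
      rw [hceq r, hR0]; linarith
    linarith [h3, h4]
  have hnpos : ∀ r, 0 < n r := fun r => by have := f2 r; omega
  -- fact 3 : coordinate j0 + n r
  have f3 : ∀ r, ‖α r‖ * W w j0 (n r) * ‖(x : ∀ _ : ℤ, ℂ) j0‖ ≤ 1/2 := by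
    intro r
    have h := hcoord r (j0 + n r)
    have hne : j0 + (n r : ℤ) ≠ 0 := by
      have h2 := f2 r
      have : (j0.natAbs : ℤ) + 1 < n r := by exact_mod_cast h2
      omega
    rw [if_neg hne, mul_zero, sub_zero] at h
    have harg : j0 + (n r : ℤ) - n r = j0 := by ring
    rw [harg] at h
    calc ‖α r‖ * W w j0 (n r) * ‖(x : ∀ _ : ℤ, ℂ) j0‖
        = ‖α r * ((W w j0 (n r) : ℝ) : ℂ) * (x : ∀ _ : ℤ, ℂ) j0‖ := by
          rw [norm_mul, norm_mul, Complex.norm_real, Real.norm_of_nonneg (hWpos j0 (n r)).le]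
      _ ≤ 1/2 := h.le
  -- bound on the first product
  have hA : ∀ r, ∏ k ∈ Finset.range (n r), 1 / w (-((k : ℤ) + 1)) ≤ ‖x‖ / (c r - 1/2) := by
    intro r
    rw [prod_inv_eq w hw]
    rw [div_le_div_iff₀ (hPpos r) (hcpos r), one_mul]
    linarith [f1' r]
  -- bound on the second product
  have hB : ∀ r, (∏ k ∈ Finset.range (n r), w ((k : ℤ) + 1)) *
      ∏ k ∈ Finset.range (n r), 1 / w (-((k : ℤ) + 1))
      ≤ (K ^ (1 - j0).natAbs * ‖x‖ / (2 * ‖(x : ∀ _ : ℤ, ℂ) j0‖)) / (c r - 1/2) := by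
    intro r
    rw [prod_inv_eq w hw, prod_pos_eq w]
    have hcomp : W w 1 (n r) ≤ K ^ (1 - j0).natAbs * W w j0 (n r) :=
      W_comp hw hm'0 hm' hM 1 j0 (n r)
    -- from f1 and f3 : W j0 n ≤ P ‖x‖ / (2 ‖x j0‖ (c-1/2))
    have hαpos : 0 < ‖α r‖ := by
      rcases (norm_nonneg (α r)).lt_or_eq with h | h
      · exact h
      · exfalso
        have := f1 r
        rw [← h, zero_mul, zero_mul] at this
        linarith [hcpos r]
    have key : (c r - 1/2) * (W w j0 (n r) * ‖(x : ∀ _ : ℤ, ℂ) j0‖) ≤ P r * ‖x‖ * (1/2) := by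
      have h1 := f1 r
      have h3 := f3 r
      have hxn : ‖(x : ∀ _ : ℤ, ℂ) (-(n r : ℤ))‖ ≤ ‖x‖ :=
        lp.norm_apply_le_norm (E := fun _ : ℤ => ℂ) (p := 2) (by norm_num) x _
      calc (c r - 1/2) * (W w j0 (n r) * ‖(x : ∀ _ : ℤ, ℂ) j0‖)
          ≤ (‖α r‖ * P r * ‖(x : ∀ _ : ℤ, ℂ) (-(n r : ℤ))‖)
            * (W w j0 (n r) * ‖(x : ∀ _ : ℤ, ℂ) j0‖) :=
            mul_le_mul_of_nonneg_right h1
              (mul_nonneg (hWpos j0 (n r)).le (norm_nonneg _))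
        _ = (P r * ‖(x : ∀ _ : ℤ, ℂ) (-(n r : ℤ))‖)
            * (‖α r‖ * W w j0 (n r) * ‖(x : ∀ _ : ℤ, ℂ) j0‖) := by ring
        _ ≤ (P r * ‖(x : ∀ _ : ℤ, ℂ) (-(n r : ℤ))‖) * (1/2) :=
            mul_le_mul_of_nonneg_left h3 (mul_nonneg (hPpos r).le (norm_nonneg _))
        _ ≤ P r * ‖x‖ * (1/2) := by
            nlinarith [mul_le_mul_of_nonneg_left hxn (hPpos r).le]
    -- conclude
    rw [mul_one_div, div_le_div_iff₀ (hPpos r) (hcpos r)]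
    have key2 : W w j0 (n r) * (c r - 1/2) ≤ P r * ‖x‖ / (2 * ‖(x : ∀ _ : ℤ, ℂ) j0‖) := by
      rw [le_div_iff₀ (by linarith)]
      nlinarith [key]
    calc W w 1 (n r) * (c r - 1/2)
        ≤ (K ^ (1 - j0).natAbs * W w j0 (n r)) * (c r - 1/2) :=
          mul_le_mul_of_nonneg_right hcomp (hcpos r).le
      _ = K ^ (1 - j0).natAbs * (W w j0 (n r) * (c r - 1/2)) := by ring
      _ ≤ K ^ (1 - j0).natAbs * (P r * ‖x‖ / (2 * ‖(x : ∀ _ : ℤ, ℂ) j0‖)) :=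
          mul_le_mul_of_nonneg_left key2 (pow_nonneg (by linarith) _)
      _ = K ^ (1 - j0).natAbs * ‖x‖ / (2 * ‖(x : ∀ _ : ℤ, ℂ) j0‖) * P r := by
          field_simp
  -- the limits
  have hden : Tendsto (fun r : ℕ => c r - 1/2) atTop atTop := by
    have : (fun r : ℕ => c r - 1/2) = fun r : ℕ => (r:ℝ) + (R0 - 1/2) := by
      funext r; rw [hceq r]; ring
    rw [this]
    exact tendsto_atTop_add_const_right _ _ tendsto_natCast_atTop_atTop
  refine ⟨n, hnpos, ?_, ?_⟩
  · apply squeeze_zero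
      (fun r => Finset.prod_nonneg fun k _ => one_div_nonneg.mpr (hw _).le) hA
    exact Tendsto.div_atTop tendsto_const_nhds hden
  · apply squeeze_zero (fun r => mul_nonneg
      (Finset.prod_nonneg fun k _ => (hw _).le)
      (Finset.prod_nonneg fun k _ => one_div_nonneg.mpr (hw _).le)) hB
    exact Tendsto.div_atTop tendsto_const_nhds hden

end main
end Stmt11Aux

namespace Stmt11Aux

lemma single_sub (i : ℤ) (a b : ℂ) :
    (lp.single 2 i (a - b) : H2) = lp.single 2 i a - lp.single 2 i b := by
  apply lp.ext; funext j
  rw [lp.coeFn_sub, Pi.sub_apply, single_apply', single_apply', single_apply']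
  split <;> simp

/-- complex number from a pair of rationals -/
def ratC (q : ℚ × ℚ) : ℂ := (q.1 : ℝ) + (q.2 : ℝ) * Complex.I

lemma ratC_zero : ratC 0 = 0 := by simp [ratC]

lemma ratC_dense (z : ℂ) {δ : ℝ} (hδ : 0 < δ) : ∃ q : ℚ × ℚ, ‖z - ratC q‖ < δ := by
  obtain ⟨q1, hq1⟩ := exists_rat_near z.re (by linarith : (0:ℝ) < δ/2)
  obtain ⟨q2, hq2⟩ := exists_rat_near z.im (by linarith : (0:ℝ) < δ/2)
  refine ⟨(q1, q2), ?_⟩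
  have hre : (z - ratC (q1, q2)).re = z.re - q1 := by simp [ratC]
  have him : (z - ratC (q1, q2)).im = z.im - q2 := by simp [ratC]
  calc ‖z - ratC (q1, q2)‖ ≤ |(z - ratC (q1, q2)).re| + |(z - ratC (q1, q2)).im| :=
        Complex.norm_le_abs_re_add_abs_im _
    _ < δ := by rw [hre, him]; linarith [hq1, hq2]

/-- countable family of finitely supported vectors with rational coordinates -/
def ratVec (f : ℤ →₀ ℚ × ℚ) : H2 := ∑ i ∈ f.support, lp.single 2 i (ratC (f i))

lemma ratVec_countable : (Set.range ratVec).Countable := Set.countable_range _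

lemma ratVec_rep (f : ℤ →₀ ℚ × ℚ) :
    ∃ (A : Finset ℤ) (c : ℤ → ℂ), ratVec f = ∑ i ∈ A, lp.single 2 i (c i) :=
  ⟨f.support, fun i => ratC (f i), rfl⟩

lemma finsum_approx (x : H2) {ε : ℝ} (hε : 0 < ε) :
    ∃ A : Finset ℤ, ‖(∑ i ∈ A, lp.single 2 i ((x : ∀ _ : ℤ, ℂ) i)) - x‖ < ε := by
  have h := lp.hasSum_single (E := fun _ : ℤ => ℂ) (by norm_num : (2:ℝ≥0∞) ≠ ⊤) x
  have h2 := Metric.tendsto_nhds.mp h ε hε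
  rw [SummationFilter.unconditional_filter, Filter.eventually_atTop] at h2
  obtain ⟨A, hA⟩ := h2
  exact ⟨A, by simpa [dist_eq_norm] using hA A le_rfl⟩

lemma ratVec_dense : Dense (Set.range ratVec) := by
  rw [Metric.dense_iff]
  intro x ε hε
  obtain ⟨A, hA⟩ := finsum_approx x (half_pos hε)
  set δ : ℝ := ε / 2 / (A.card + 1) with hδdef
  have hδ : 0 < δ := by positivity
  have hch : ∀ i : ℤ, ∃ q : ℚ × ℚ, ‖(x : ∀ _ : ℤ, ℂ) i - ratC q‖ < δ :=
    fun i => ratC_dense _ hδ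
  choose q hq using hch
  classical
  refine ⟨ratVec (Finsupp.onFinset A (fun i => if i ∈ A then q i else 0)
    (fun i h => by by_contra hc; simp [hc] at h)), ?_, Set.mem_range_self _⟩
  rw [Metric.mem_ball, dist_eq_norm]
  set f : ℤ →₀ ℚ × ℚ := Finsupp.onFinset A (fun i => if i ∈ A then q i else 0)
    (fun i h => by by_contra hc; simp [hc] at h) with hfdef
  have hfsupp : f.support ⊆ A := Finsupp.support_onFinset_subset
  have hfval : ∀ i ∈ A, f i = q i := fun i hi => by simp [hfdef, Finsupp.onFinset_apply, hi]
  have hgf : ratVec f = ∑ i ∈ A, lp.single 2 i (ratC (q i)) := by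
    rw [ratVec]
    rw [Finset.sum_subset hfsupp (fun i hi hni => ?_)]
    · exact Finset.sum_congr rfl fun i hi => by rw [hfval i hi]
    · rw [Finsupp.notMem_support_iff.mp hni, ratC_zero, single_zero]
  have hdiff : ratVec f - ∑ i ∈ A, lp.single 2 i ((x : ∀ _ : ℤ, ℂ) i)
      = ∑ i ∈ A, lp.single 2 i (ratC (q i) - (x : ∀ _ : ℤ, ℂ) i) := by
    rw [hgf, ← Finset.sum_sub_distrib]
    exact Finset.sum_congr rfl fun i _ => (single_sub _ _ _).symm
  have hnorm1 : ‖ratVec f - ∑ i ∈ A, lp.single 2 i ((x : ∀ _ : ℤ, ℂ) i)‖ ≤ A.card * δ := by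
    rw [hdiff]
    refine (norm_sum_single_le A _).trans ?_
    calc ∑ i ∈ A, ‖ratC (q i) - (x : ∀ _ : ℤ, ℂ) i‖
        ≤ ∑ _i ∈ A, δ := Finset.sum_le_sum fun i _ => by
          rw [norm_sub_rev]; exact (hq i).le
      _ = A.card * δ := by rw [Finset.sum_const, nsmul_eq_mul]
  have hcard : (A.card : ℝ) * δ < ε / 2 := by
    have h1 : (0:ℝ) < (A.card:ℝ) + 1 := by positivity
    have key : (A.card : ℝ) * (ε/2/((A.card:ℝ)+1)) = (ε/2) * ((A.card:ℝ)/((A.card:ℝ)+1)) := by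
      field_simp
    have h3 : (A.card:ℝ)/((A.card:ℝ)+1) < 1 := by
      rw [div_lt_one h1]; linarith
    rw [hδdef, key]
    nlinarith [half_pos hε]
  calc ‖ratVec f - x‖
      ≤ ‖ratVec f - ∑ i ∈ A, lp.single 2 i ((x : ∀ _ : ℤ, ℂ) i)‖
        + ‖(∑ i ∈ A, lp.single 2 i ((x : ∀ _ : ℤ, ℂ) i)) - x‖ := by
        have := norm_sub_le_norm_sub_add_norm_sub (ratVec f)
          (∑ i ∈ A, lp.single 2 i ((x : ∀ _ : ℤ, ℂ) i)) x
        exact this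
    _ < ε/2 + ε/2 := by
        exact add_lt_add_of_le_of_lt (hnorm1.trans_lt hcard).le hA
    _ = ε := by ring

end Stmt11Aux

namespace Stmt11Aux
section back
variable {w : ℤ → ℝ} {T : H2 →L[ℂ] H2}

set_option maxHeartbeats 1000000 in
lemma Gdense
    (hw : ∀ n, 0 < w n) {m' : ℝ} (hm'0 : 0 < m') (hm' : ∀ i, m' ≤ w i)
    {M : ℝ} (hM : ∀ i, w i ≤ M)
    (hT : ∀ (x : H2) (n : ℤ), (T x : ∀ _ : ℤ, ℂ) n = (w (n - 1) : ℂ) * (x : ∀ _ : ℤ, ℂ) (n - 1))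
    (n : ℕ → ℕ)
    (hA' : Tendsto (fun r => 1 / W w (-(n r : ℤ)) (n r)) atTop (𝓝 0))
    (hB' : Tendsto (fun r => W w 1 (n r) * (1 / W w (-(n r : ℤ)) (n r))) atTop (𝓝 0))
    (B : Finset ℤ) (d : ℤ → ℂ) {ε₂ : ℝ} (hε₂ : 0 < ε₂) :
    Dense (⋃ (N : ℕ) (β : ℂ) (_ : ‖β‖ ≤ 1),
      (fun z => β • (T ^ N) z) ⁻¹' Metric.ball (∑ i ∈ B, lp.single 2 i (d i)) ε₂) := by
  classical
  set y : H2 := ∑ i ∈ B, lp.single 2 i (d i) with hydef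
  rw [Metric.dense_iff]
  intro u0 ε0 hε0
  set K : ℝ := M / m' with hKdef
  have hK0 : 0 < K := div_pos (hm'0.trans_le ((hm' 0).trans (hM 0))) hm'0
  have hWpos := W_pos hw
  -- an approximation of u0 from the countable set
  obtain ⟨u, hu, huS⟩ := Metric.dense_iff.mp ratVec_dense u0 (ε0/2) (by linarith)
  obtain ⟨f, rfl⟩ := huS
  obtain ⟨A, cc, hrep⟩ := ratVec_rep f
  -- constants
  set Cu : ℝ := ∑ i ∈ A, ‖cc i‖ * K ^ (i - 1).natAbs with hCu
  set Cv : ℝ := ∑ i ∈ B, ‖d i‖ * K ^ i.natAbs with hCv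
  have hCu0 : 0 ≤ Cu := Finset.sum_nonneg fun i _ => by positivity
  have hCv0 : 0 ≤ Cv := Finset.sum_nonneg fun i _ => by positivity
  -- select a good r
  have hev1 : ∀ᶠ r in atTop, Cv * (1 / W w (-(n r : ℤ)) (n r)) < ε0/2 := by
    have h := hA'.const_mul Cv
    rw [mul_zero] at h
    exact h.eventually_lt_const (by linarith)
  have hev2 : ∀ᶠ r in atTop,
      (Cu * Cv) * (W w 1 (n r) * (1 / W w (-(n r : ℤ)) (n r))) < (ε0/2) * ε₂ / 2 := by
    have h := hB'.const_mul (Cu * Cv)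
    rw [mul_zero] at h
    exact h.eventually_lt_const (by positivity)
  obtain ⟨r, h1, h2⟩ := (hev1.and hev2).exists
  set N : ℕ := n r with hNdef
  set P : ℝ := W w (-(N : ℤ)) N with hPdef
  have hPpos : 0 < P := hWpos _ _
  -- the approximate preimage vector
  set v : H2 := ∑ i ∈ B, lp.single 2 (i - N) (d i / ((W w (i - N) N : ℝ) : ℂ)) with hvdef
  have hTv : (T ^ N) v = y := by
    rw [hvdef, map_sum, hydef]
    refine Finset.sum_congr rfl fun i _ => ?_
    rw [pow_single hT]
    have h3 : i - (N:ℤ) + N = i := by ring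
    rw [h3]
    congr 1
    rw [mul_div_cancel₀]
    exact_mod_cast (hWpos (i - N) N).ne'
  -- norm bounds
  have hvnorm : ‖v‖ ≤ Cv * (1 / P) := by
    rw [hvdef]
    refine (norm_sum_single_le' B (fun i => i - (N:ℤ)) _).trans ?_
    rw [hCv, Finset.sum_mul]
    refine Finset.sum_le_sum fun i _ => ?_
    rw [norm_div]
    have hWc : ‖((W w (i - N) N : ℝ) : ℂ)‖ = W w (i - N) N := by
      rw [Complex.norm_real, Real.norm_of_nonneg (hWpos _ _).le]
    rw [hWc]
    have hcomp : P ≤ K ^ i.natAbs * W w (i - N) N := by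
      have h := W_comp hw hm'0 hm' hM (-(N:ℤ)) (i - N) N
      have harg : (-(N:ℤ) - (i - N)).natAbs = i.natAbs := by
        rw [show -(N:ℤ) - (i - N) = -i by ring, Int.natAbs_neg]
      rwa [harg] at h
    rw [div_le_iff₀ (hWpos _ _)]
    calc ‖d i‖ ≤ ‖d i‖ * (K ^ i.natAbs * W w (i - N) N) * (1/P) := by
          rw [mul_one_div, le_div_iff₀ hPpos]
          have : ‖d i‖ * P ≤ ‖d i‖ * (K ^ i.natAbs * W w (i - N) N) :=
            mul_le_mul_of_nonneg_left hcomp (norm_nonneg _)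
          linarith
      _ = ‖d i‖ * K ^ i.natAbs * (1/P) * W w (i - N) N := by ring
  have hTu : ‖(T ^ N) (ratVec f)‖ ≤ Cu * W w 1 N := by
    rw [hrep, map_sum]
    have heq : ∀ i : ℤ, (T ^ N) (lp.single 2 i (cc i))
        = lp.single 2 (i + N) (((W w i N : ℝ) : ℂ) * cc i) := fun i => pow_single hT N i (cc i)
    calc ‖∑ i ∈ A, (T ^ N) (lp.single 2 i (cc i))‖
        ≤ ∑ i ∈ A, ‖(T ^ N) (lp.single 2 i (cc i))‖ := norm_sum_le _ _
      _ ≤ Cu * W w 1 N := by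
          rw [hCu, Finset.sum_mul]
          refine Finset.sum_le_sum fun i _ => ?_
          rw [heq i, norm_single', norm_mul, Complex.norm_real,
            Real.norm_of_nonneg (hWpos i N).le]
          have hcomp : W w i N ≤ K ^ (i - 1).natAbs * W w 1 N :=
            W_comp hw hm'0 hm' hM i 1 N
          calc W w i N * ‖cc i‖ ≤ (K ^ (i-1).natAbs * W w 1 N) * ‖cc i‖ :=
                mul_le_mul_of_nonneg_right hcomp (norm_nonneg _)
            _ = ‖cc i‖ * K ^ (i-1).natAbs * W w 1 N := by ring
  have hprod : ‖(T ^ N) (ratVec f)‖ * ‖v‖ < (ε0/2) * ε₂ / 2 := by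
    calc ‖(T ^ N) (ratVec f)‖ * ‖v‖ ≤ (Cu * W w 1 N) * (Cv * (1/P)) :=
          mul_le_mul hTu hvnorm (norm_nonneg _) (mul_nonneg hCu0 (hWpos 1 N).le)
      _ = (Cu * Cv) * (W w 1 N * (1/P)) := by ring
      _ < (ε0/2) * ε₂ / 2 := h2
  have hvsmall : ‖v‖ < ε0/2 := by
    have : Cv * (1/P) < ε0/2 := h1
    linarith [hvnorm]
  -- the scalar
  set lam : ℝ := max 1 (2 * ‖(T ^ N) (ratVec f)‖ / ε₂) with hlam
  have hlam1 : 1 ≤ lam := le_max_left _ _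
  have hlam0 : 0 < lam := lt_of_lt_of_le one_pos hlam1
  have hlamTu : ‖(T ^ N) (ratVec f)‖ ≤ lam * ε₂ / 2 := by
    have h3 : 2 * ‖(T ^ N) (ratVec f)‖ / ε₂ ≤ lam := le_max_right _ _
    rw [div_le_iff₀ hε₂] at h3
    linarith
  have hlamv : lam * ‖v‖ < ε0/2 := by
    rcases max_cases 1 (2 * ‖(T ^ N) (ratVec f)‖ / ε₂) with ⟨he, hc⟩ | ⟨he, hc⟩
    · rw [hlam, he, one_mul]; exact hvsmall
    · rw [hlam, he, div_mul_eq_mul_div, div_lt_iff₀ hε₂]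
      nlinarith [hprod, norm_nonneg v, norm_nonneg ((T ^ N) (ratVec f))]
  -- the witness
  set β : ℂ := ((lam⁻¹ : ℝ) : ℂ) with hβdef
  have hβnorm : ‖β‖ ≤ 1 := by
    rw [hβdef, Complex.norm_real, Real.norm_of_nonneg (inv_pos.mpr hlam0).le]
    exact inv_le_one_of_one_le₀ hlam1
  set z : H2 := ratVec f + ((lam : ℝ) : ℂ) • v with hzdef
  have hz1 : z ∈ Metric.ball u0 ε0 := by
    rw [Metric.mem_ball, dist_eq_norm]
    have hdu : ‖ratVec f - u0‖ < ε0/2 := by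
      rw [← dist_eq_norm]; exact Metric.mem_ball.mp hu
    have hzu : z - u0 = (ratVec f - u0) + ((lam : ℝ) : ℂ) • v := by
      rw [hzdef]; abel
    have hlv : ‖((lam : ℝ) : ℂ) • v‖ = lam * ‖v‖ := by
      rw [norm_smul, Complex.norm_real, Real.norm_of_nonneg hlam0.le]
    calc ‖z - u0‖ ≤ ‖ratVec f - u0‖ + ‖((lam : ℝ) : ℂ) • v‖ := by
          rw [hzu]; exact norm_add_le _ _
      _ < ε0/2 + ε0/2 := by rw [hlv]; exact add_lt_add hdu hlamv
      _ = ε0 := by ring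
  have hz2 : β • (T ^ N) z ∈ Metric.ball y ε₂ := by
    have hTz : (T ^ N) z = (T ^ N) (ratVec f) + ((lam : ℝ) : ℂ) • y := by
      rw [hzdef, map_add, map_smul, hTv]
    have hβlam : β * ((lam : ℝ) : ℂ) = 1 := by
      rw [hβdef, ← Complex.ofReal_mul, inv_mul_cancel₀ hlam0.ne', Complex.ofReal_one]
    have hsmul : β • (T ^ N) z = β • (T ^ N) (ratVec f) + y := by
      rw [hTz, smul_add, smul_smul, hβlam, one_smul]
    rw [Metric.mem_ball, hsmul, dist_eq_norm]
    have : β • (T ^ N) (ratVec f) + y - y = β • (T ^ N) (ratVec f) := by abel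
    rw [this, norm_smul, hβdef, Complex.norm_real,
      Real.norm_of_nonneg (inv_pos.mpr hlam0).le]
    have hle : lam⁻¹ * ‖(T ^ N) (ratVec f)‖ ≤ ε₂/2 := by
      have h3 := mul_le_mul_of_nonneg_left hlamTu (inv_pos.mpr hlam0).le
      rw [show lam⁻¹ * (lam * ε₂ / 2) = (lam⁻¹ * lam) * ε₂ / 2 by ring,
        inv_mul_cancel₀ hlam0.ne', one_mul] at h3
      exact h3
    linarith
  exact ⟨z, hz1, Set.mem_iUnion.mpr ⟨N, Set.mem_iUnion.mpr ⟨β,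
    Set.mem_iUnion.mpr ⟨hβnorm, hz2⟩⟩⟩⟩

end back
end Stmt11Aux

namespace Stmt11Aux
section back2
variable {w : ℤ → ℝ} {T : H2 →L[ℂ] H2}

lemma backward
    (hw : ∀ n, 0 < w n) (hinv : ∃ m : ℝ, 0 < m ∧ ∀ n, m ≤ w n)
    (hT : ∀ (x : H2) (n : ℤ), (T x : ∀ _ : ℤ, ℂ) n = (w (n - 1) : ℂ) * (x : ∀ _ : ℤ, ℂ) (n - 1))
    (n : ℕ → ℕ)
    (hA : Tendsto (fun r => ∏ k ∈ Finset.range (n r), 1 / w (-((k : ℤ) + 1)))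
      atTop (𝓝 0))
    (hB : Tendsto (fun r => (∏ k ∈ Finset.range (n r), w ((k : ℤ) + 1)) *
        ∏ k ∈ Finset.range (n r), 1 / w (-((k : ℤ) + 1))) atTop (𝓝 0)) :
    DiskCyclic T := by
  classical
  obtain ⟨m, hm0, hm⟩ := hinv
  set M : ℝ := max ‖T‖ 1 with hMdef
  have hM : ∀ i, w i ≤ M := weight_le_M hT hw
  set m' : ℝ := min m 1 with hm'def
  have hm'0 : 0 < m' := lt_min hm0 one_pos
  have hm' : ∀ i, m' ≤ w i := fun i => (min_le_left _ _).trans (hm i)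
  have hA' : Tendsto (fun r => 1 / W w (-(n r : ℤ)) (n r)) atTop (𝓝 0) := by
    have e1 : (fun r => ∏ k ∈ Finset.range (n r), 1 / w (-((k : ℤ) + 1)))
        = fun r => 1 / W w (-(n r : ℤ)) (n r) := funext fun r => prod_inv_eq w hw (n r)
    rwa [e1] at hA
  have hB' : Tendsto (fun r => W w 1 (n r) * (1 / W w (-(n r : ℤ)) (n r))) atTop (𝓝 0) := by
    have e2 : (fun r => (∏ k ∈ Finset.range (n r), w ((k : ℤ) + 1)) *
        ∏ k ∈ Finset.range (n r), 1 / w (-((k : ℤ) + 1)))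
        = fun r => W w 1 (n r) * (1 / W w (-(n r : ℤ)) (n r)) :=
      funext fun r => by rw [prod_inv_eq w hw, prod_pos_eq w]
    rwa [e2] at hB
  haveI : Countable ↥(Set.range ratVec) := ratVec_countable.to_subtype
  set F : ↥(Set.range ratVec) × ℕ → Set H2 := fun p =>
    ⋃ (N : ℕ) (β : ℂ) (_ : ‖β‖ ≤ 1),
      (fun z => β • (T ^ N) z) ⁻¹' Metric.ball (p.1 : H2) (1/((p.2 : ℝ)+1)) with hFdef
  have hopen : ∀ p, IsOpen (F p) := by
    intro p
    refine isOpen_iUnion fun N => isOpen_iUnion fun β => isOpen_iUnion fun _ => ?_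
    exact Metric.isOpen_ball.preimage (((T ^ N).continuous).const_smul β)
  have hdense : ∀ p, Dense (F p) := by
    rintro ⟨⟨y, hy⟩, k⟩
    obtain ⟨f, hf⟩ := hy
    obtain ⟨B, d, hBd⟩ := ratVec_rep f
    have hε₂ : (0:ℝ) < 1/((k : ℝ)+1) := by positivity
    have := Gdense hw hm'0 hm' hM hT n hA' hB' B d hε₂
    rw [← hBd, hf] at this
    exact this
  have hbig : Dense (⋂ p, F p) := dense_iInter_of_isOpen hopen hdense
  obtain ⟨x, hx⟩ := hbig.nonempty
  refine ⟨x, Metric.dense_iff.mpr fun zz ε hε => ?_⟩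
  obtain ⟨y, hyb, hyS⟩ := Metric.dense_iff.mp ratVec_dense zz (ε/2) (by linarith)
  obtain ⟨k, hk⟩ := exists_nat_one_div_lt (show (0:ℝ) < ε/2 by linarith)
  have hxF := Set.mem_iInter.mp hx (⟨⟨y, hyS⟩, k⟩ : ↥(Set.range ratVec) × ℕ)
  rw [hFdef] at hxF
  simp only [Set.mem_iUnion] at hxF
  obtain ⟨N, β, hβ, hball⟩ := hxF
  rw [Set.mem_preimage, Metric.mem_ball] at hball
  refine ⟨β • (T ^ N) x, Metric.mem_ball.mpr ?_, ⟨N, β, hβ, rfl⟩⟩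
  have hyzz : dist y zz < ε/2 := Metric.mem_ball.mp hyb
  calc dist (β • (T ^ N) x) zz ≤ dist (β • (T ^ N) x) y + dist y zz := dist_triangle _ _ _
    _ < 1/((k : ℝ)+1) + ε/2 := add_lt_add hball hyzz
    _ < ε/2 + ε/2 := by linarith
    _ = ε := by ring

end back2
end Stmt11Aux

theorem stmt11 (w : ℤ → ℝ) (hw : ∀ n, 0 < w n)
    (hinv : ∃ m : ℝ, 0 < m ∧ ∀ n, m ≤ w n)
    (T : lp (fun _ : ℤ => ℂ) 2 →L[ℂ] lp (fun _ : ℤ => ℂ) 2)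
    (hT : ∀ (x : lp (fun _ : ℤ => ℂ) 2) (n : ℤ), (T x : ∀ _ : ℤ, ℂ) n = (w (n - 1) : ℂ) * (x : ∀ _ : ℤ, ℂ) (n - 1)) :
    DiskCyclic T ↔
      ∃ n : ℕ → ℕ, (∀ r, 0 < n r) ∧
        Filter.Tendsto (fun r => ∏ k ∈ Finset.range (n r), 1 / w (-((k : ℤ) + 1)))
          Filter.atTop (nhds 0) ∧
        Filter.Tendsto (fun r => (∏ k ∈ Finset.range (n r), w ((k : ℤ) + 1)) *
            ∏ k ∈ Finset.range (n r), 1 / w (-((k : ℤ) + 1)))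
          Filter.atTop (nhds 0) := by
  constructor
  · exact Stmt11Aux.forward hw hinv hT
  · rintro ⟨n, -, hA, hB⟩
    exact Stmt11Aux.backward hw hinv hT n hA hB
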